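/- Let (ℱ_l)_{l∈ℕ} be a filtration, Y a random variable with values in a finite set M, and define R_l = E[ min_{y∈M} P(Y ≠ y | ℱ_l) ] and R_∞ = E[ min_{y∈M} P(Y ≠ y | ℱ_∞) ] where ℱ_∞ = σ(⋃_l ℱ_l). Then (R_l) is nonincreasing and R_l → R_∞ as l → ∞. -/

import Mathlib

open MeasureTheory Filter

private lemma meas_inf'_aux {Ω M : Type*} [MeasurableSpace Ω] {s : Finset M} (hs : s.Nonempty)
    (g : M → Ω → ℝ) (hg : ∀ y, Measurable (g y)) :
    Measurable fun ω => s.inf' hs fun y => g y ω := by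
  induction hs using Finset.Nonempty.cons_induction with
  | singleton a => simp only [Finset.inf'_singleton]; exact hg a
  | cons a s ha hs ih =>
    simp only [Finset.inf'_cons hs]
    exact (hg a).inf ih

open scoped Classical in
theorem stmt_10 (Ω M : Type*) [m0 : MeasurableSpace Ω]
    [MeasurableSpace M] [MeasurableSingletonClass M] [Fintype M] [Nonempty M]
    (μ : Measure Ω) [IsProbabilityMeasure μ]
    (ℱ : Filtration ℕ m0) (Y : Ω → M) (hY : Measurable Y)
    (R : ℕ → ℝ) (Rinf : ℝ)
    (hR : ∀ l, R l = ∫ ω, Finset.univ.inf' Finset.univ_nonempty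
      (fun y => 1 - (μ[(fun ω' => if Y ω' = y then (1 : ℝ) else 0) | ℱ l]) ω) ∂μ)
    (hRinf : Rinf = ∫ ω, Finset.univ.inf' Finset.univ_nonempty
      (fun y => 1 - (μ[(fun ω' => if Y ω' = y then (1 : ℝ) else 0) | ⨆ l, ℱ l]) ω) ∂μ) :
    Antitone R ∧ Tendsto R atTop (nhds Rinf) := by
  set F : M → Ω → ℝ := fun y ω' => if Y ω' = y then (1 : ℝ) else 0 with hF
  have hFeq : ∀ y : M, (fun ω' => if Y ω' = y then (1 : ℝ) else 0) = F y := fun y => rfl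
  simp only [hFeq] at hR hRinf
  have hm_inf : (⨆ l, ℱ l) ≤ m0 := iSup_le fun l => ℱ.le l
  have hFint : ∀ y, Integrable (F y) μ := by
    intro y
    have : F y = (Y ⁻¹' {y}).indicator (fun _ => (1 : ℝ)) := by
      ext ω; simp [hF, Set.indicator_apply]
    rw [this]
    exact (integrable_const 1).indicator (hY (measurableSet_singleton y))
  have hF0 : ∀ y, (0 : Ω → ℝ) ≤ F y := by
    intro y ω; simp only [hF]; split_ifs <;> norm_num
  have hF1 : ∀ y, F y ≤ fun _ => (1 : ℝ) := by
    intro y ω; simp only [hF]; split_ifs <;> norm_num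
  -- bounds on condexp
  have hbound : ∀ (m : MeasurableSpace Ω), m ≤ m0 → ∀ y : M,
      ∀ᵐ ω ∂μ, 0 ≤ (μ[F y|m]) ω ∧ (μ[F y|m]) ω ≤ 1 := by
    intro m hm y
    have h0 : (0 : Ω → ℝ) ≤ᵐ[μ] μ[F y|m] := condExp_nonneg (Filter.Eventually.of_forall (hF0 y))
    have h1 : μ[F y|m] ≤ᵐ[μ] μ[(fun _ => (1 : ℝ))|m] :=
      condExp_mono (hFint y) (integrable_const 1) (Filter.Eventually.of_forall (hF1 y))
    rw [condExp_const hm] at h1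
    filter_upwards [h0, h1] with ω a b
    exact ⟨a, b⟩
  -- The integrand
  set G : MeasurableSpace Ω → Ω → ℝ := fun m ω =>
    Finset.univ.inf' Finset.univ_nonempty (fun y => 1 - (μ[F y|m]) ω) with hG
  have hGmeas : ∀ (m : MeasurableSpace Ω), m ≤ m0 → Measurable[m0] (G m) := by
    intro m hm
    have hy : ∀ y : M, Measurable[m0] (μ[F y|m]) := fun y =>
      (stronglyMeasurable_condExp.mono hm).measurable
    exact @meas_inf'_aux Ω M m0 _ Finset.univ_nonempty _ (fun y => measurable_const.sub (hy y))
  have hGb : ∀ (m : MeasurableSpace Ω), m ≤ m0 → ∀ᵐ ω ∂μ, ‖G m ω‖ ≤ 1 := by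
    intro m hm
    filter_upwards [ae_all_iff.2 (hbound m hm)] with ω hω
    rw [Real.norm_eq_abs, abs_le]
    have h0 : (0 : ℝ) ≤ Finset.univ.inf' Finset.univ_nonempty (fun y => 1 - (μ[F y|m]) ω) :=
      Finset.le_inf' _ _ fun y _ => by linarith [(hω y).2]
    have h1 : Finset.univ.inf' Finset.univ_nonempty (fun y => 1 - (μ[F y|m]) ω)
        ≤ 1 - (μ[F (Classical.arbitrary M)|m]) ω :=
      Finset.inf'_le _ (Finset.mem_univ _)
    constructor
    · simpa only [hG] using le_trans (by norm_num : (-1 : ℝ) ≤ 0) h0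
    · exact le_trans h1 (by linarith [(hω (Classical.arbitrary M)).1])
  have hGint : ∀ (m : MeasurableSpace Ω), m ≤ m0 → Integrable (G m) μ := by
    intro m hm
    exact Integrable.mono' (integrable_const 1) (hGmeas m hm).aestronglyMeasurable (hGb m hm)
  constructor
  · -- Antitone
    refine antitone_nat_of_succ_le fun l => ?_
    rw [hR l, hR (l + 1)]
    have key : μ[G (ℱ (l + 1))|ℱ l] ≤ᵐ[μ] G (ℱ l) := by
      have hy : ∀ y : M, μ[G (ℱ (l + 1))|ℱ l] ≤ᵐ[μ] fun ω => 1 - (μ[F y|ℱ l]) ω := by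
        intro y
        have h1 : μ[G (ℱ (l + 1))|ℱ l] ≤ᵐ[μ]
            μ[(fun ω => 1 - (μ[F y|ℱ (l + 1)]) ω)|ℱ l] := by
          refine condExp_mono (hGint _ (ℱ.le _))
            ((integrable_const 1).sub integrable_condExp)
            (Filter.Eventually.of_forall fun ω => ?_)
          exact Finset.inf'_le _ (Finset.mem_univ y)
        have h2 : μ[(fun ω => 1 - (μ[F y|ℱ (l + 1)]) ω)|ℱ l] =ᵐ[μ]
            fun ω => 1 - (μ[F y|ℱ l]) ω := by
          have hsub : μ[(fun ω => 1 - (μ[F y|ℱ (l + 1)]) ω)|ℱ l] =ᵐ[μ]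
              μ[(fun _ => (1 : ℝ))|ℱ l] - μ[μ[F y|ℱ (l + 1)]|ℱ l] :=
            condExp_sub (integrable_const (1 : ℝ)) integrable_condExp (ℱ l)
          have htow : μ[μ[F y|ℱ (l + 1)]|ℱ l] =ᵐ[μ] μ[F y|ℱ l] :=
            condExp_condExp_of_le (ℱ.mono l.le_succ) (ℱ.le (l + 1))
          filter_upwards [hsub, htow] with ω h1 h2
          rw [h1, condExp_const (ℱ.le l)]
          simp [h2]
        exact h1.trans h2.le
      have := ae_all_iff.2 hy
      filter_upwards [this] with ω hω
      exact Finset.le_inf' _ _ fun y _ => hω y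
    calc ∫ ω, G (ℱ (l + 1)) ω ∂μ
        = ∫ ω, (μ[G (ℱ (l + 1))|ℱ l]) ω ∂μ := (integral_condExp (ℱ.le l)).symm
      _ ≤ ∫ ω, G (ℱ l) ω ∂μ := integral_mono_ae integrable_condExp (hGint _ (ℱ.le l)) key
  · -- Convergence
    rw [hRinf]
    have hRfun : R = fun l => ∫ ω, G (ℱ l) ω ∂μ := funext hR
    rw [hRfun]
    refine tendsto_integral_of_dominated_convergence (fun _ => (1 : ℝ))
      (fun l => (hGmeas _ (ℱ.le l)).aestronglyMeasurable) (integrable_const 1)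
      (fun l => hGb _ (ℱ.le l)) ?_
    have hy : ∀ y : M, ∀ᵐ ω ∂μ,
        Tendsto (fun l => (μ[F y|ℱ l]) ω) atTop (nhds ((μ[F y|⨆ l, ℱ l]) ω)) :=
      fun y => tendsto_ae_condExp (F y)
    filter_upwards [ae_all_iff.2 hy] with ω hω
    exact Filter.Tendsto.finset_inf'_nhds_apply _ fun y _ => (hω y).const_sub 1
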